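/- If f: G → ℂ is a nonzero function on a finite abelian group G, then |supp(f)| · |supp(f̂)| ≥ |G|, where f̂ is the Fourier transform of f. -/

import Mathlib

open Complex Finset

theorem uncertainty_principle_finite_abelian
    {G : Type*} [AddCommGroup G] [Fintype G]
    (e : G → G → ℂ)
    (habs : ∀ x ξ, ‖e x ξ‖ = 1)
    (hmul₁ : ∀ x x' ξ, e (x + x') ξ = e x ξ * e x' ξ)
    (hmul₂ : ∀ x ξ ξ', e x (ξ + ξ') = e x ξ * e x ξ')
    (hnd₁ : ∀ x : G, x ≠ 0 → ∃ ξ : G, e x ξ ≠ 1)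
    (hnd₂ : ∀ ξ : G, ξ ≠ 0 → ∃ x : G, e x ξ ≠ 1)
    (f : G → ℂ) (hf : f ≠ 0)
    (fhat : G → ℂ)
    (hfhat : ∀ ξ, fhat ξ = (Fintype.card G : ℂ)⁻¹ * ∑ x : G, f x * (starRingEnd ℂ) (e x ξ)) :
    (Function.support f).ncard * (Function.support fhat).ncard ≥ Fintype.card G := by
  classical
  have hne : ∀ x ξ, e x ξ ≠ 0 := by
    intro x ξ h
    have := habs x ξ
    rw [h] at this
    simp at this
  have e0 : ∀ ξ, e 0 ξ = 1 := by
    intro ξ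
    have h := hmul₁ 0 0 ξ
    rw [add_zero] at h
    have : e 0 ξ * 1 = e 0 ξ * e 0 ξ := by rw [mul_one, ← h]
    exact (mul_left_cancel₀ (hne 0 ξ) this).symm
  have hconj : ∀ x ξ, (starRingEnd ℂ) (e x ξ) = e (-x) ξ := by
    intro x ξ
    have h1 : e x ξ * e (-x) ξ = 1 := by
      rw [← hmul₁, add_neg_cancel, e0]
    have h2 : (starRingEnd ℂ) (e x ξ) * e x ξ = 1 := by
      rw [mul_comm, Complex.mul_conj, Complex.normSq_eq_norm_sq, habs]
      norm_num
    calc (starRingEnd ℂ) (e x ξ) = (starRingEnd ℂ) (e x ξ) * (e x ξ * e (-x) ξ) := by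
          rw [h1, mul_one]
      _ = ((starRingEnd ℂ) (e x ξ) * e x ξ) * e (-x) ξ := by ring
      _ = e (-x) ξ := by rw [h2, one_mul]
  have hsum : ∀ z : G, z ≠ 0 → ∑ ξ : G, e z ξ = 0 := by
    intro z hz
    obtain ⟨ξ₀, hξ₀⟩ := hnd₁ z hz
    have hshift : ∑ ξ : G, e z (ξ₀ + ξ) = ∑ ξ : G, e z ξ :=
      Equiv.sum_comp (Equiv.addLeft ξ₀) (e z)
    have h : ∑ ξ : G, e z ξ = e z ξ₀ * ∑ ξ : G, e z ξ := by
      rw [Finset.mul_sum, ← hshift]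
      exact Finset.sum_congr rfl fun ξ _ => hmul₂ z ξ₀ ξ
    have h2 : (e z ξ₀ - 1) * ∑ ξ : G, e z ξ = 0 := by
      rw [sub_mul, one_mul, ← h, sub_self]
    rcases mul_eq_zero.1 h2 with h3 | h3
    · exact absurd (by linear_combination h3) hξ₀
    · exact h3
  have hNc : (Fintype.card G : ℂ) ≠ 0 := Nat.cast_ne_zero.2 Fintype.card_ne_zero
  have key : ∀ x y : G, ∑ ξ : G, e (x - y) ξ = if y = x then (Fintype.card G : ℂ) else 0 := by
    intro x y
    by_cases h : y = x
    · subst h; simp [e0]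
    · rw [if_neg h]
      exact hsum _ (sub_ne_zero.2 (Ne.symm h))
  have hinv : ∀ x, f x = ∑ ξ : G, fhat ξ * e x ξ := by
    intro x
    have step1 : ∑ ξ : G, fhat ξ * e x ξ
        = ∑ ξ : G, ∑ y : G, (Fintype.card G : ℂ)⁻¹ * (f y * e (x - y) ξ) := by
      refine Finset.sum_congr rfl fun ξ _ => ?_
      rw [hfhat ξ, Finset.mul_sum, Finset.sum_mul]
      refine Finset.sum_congr rfl fun y _ => ?_
      rw [hconj]
      have : e (x - y) ξ = e x ξ * e (-y) ξ := by
        rw [sub_eq_add_neg, hmul₁]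
      rw [this]; ring
    rw [step1, Finset.sum_comm]
    have step2 : ∀ y : G, ∑ ξ : G, (Fintype.card G : ℂ)⁻¹ * (f y * e (x - y) ξ)
        = (Fintype.card G : ℂ)⁻¹ * (f y * (if y = x then (Fintype.card G : ℂ) else 0)) := by
      intro y
      rw [← Finset.mul_sum, ← Finset.mul_sum, key]
    simp only [step2]
    rw [Finset.sum_eq_single x]
    · rw [if_pos rfl]
      field_simp
    · intro y _ hy
      rw [if_neg hy, mul_zero, mul_zero]
    · intro h; exact absurd (Finset.mem_univ x) h
  -- Now the counting argument
  set A := (Function.support f).toFinset with hA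
  set B := (Function.support fhat).toFinset with hB
  obtain ⟨x₁, hx₁⟩ : ∃ x, f x ≠ 0 := Function.ne_iff.1 hf
  obtain ⟨x₀, -, hx₀⟩ := Finset.exists_max_image Finset.univ
    (fun x => ‖f x‖) ⟨0, Finset.mem_univ 0⟩
  set M := ‖f x₀‖ with hM
  have hMpos : 0 < M := lt_of_lt_of_le (norm_pos_iff.2 hx₁) (hx₀ x₁ (Finset.mem_univ x₁))
  have hNR : (0:ℝ) < (Fintype.card G : ℝ) := by
    exact_mod_cast Fintype.card_pos
  -- bound on |fhat ξ|
  have hbound : ∀ ξ, ‖fhat ξ‖ ≤ (Fintype.card G : ℝ)⁻¹ * (A.card * M) := by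
    intro ξ
    rw [hfhat]
    rw [norm_mul]
    have h1 : ‖((Fintype.card G : ℂ)⁻¹)‖ = (Fintype.card G : ℝ)⁻¹ := by
      rw [norm_inv]; norm_num
    rw [h1]
    refine mul_le_mul_of_nonneg_left ?_ (by positivity)
    calc ‖∑ x : G, f x * (starRingEnd ℂ) (e x ξ)‖
        ≤ ∑ x : G, ‖f x * (starRingEnd ℂ) (e x ξ)‖ :=
          norm_sum_le _ _
      _ = ∑ x : G, ‖f x‖ := by
          refine Finset.sum_congr rfl fun x _ => ?_
          rw [norm_mul, Complex.norm_conj, habs, mul_one]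
      _ = ∑ x ∈ A, ‖f x‖ := by
          refine (Finset.sum_subset (Finset.subset_univ A) ?_).symm
          intro x _ hx
          rw [hA, Set.mem_toFinset, Function.mem_support, not_not] at hx
          simp [hx]
      _ ≤ ∑ _x ∈ A, M := by
          exact Finset.sum_le_sum fun x _ => hx₀ x (Finset.mem_univ x)
      _ = A.card * M := by rw [Finset.sum_const, nsmul_eq_mul]
  have hmain : M ≤ B.card * ((Fintype.card G : ℝ)⁻¹ * (A.card * M)) := by
    calc M = ‖∑ ξ : G, fhat ξ * e x₀ ξ‖ := by rw [hM, hinv]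
      _ ≤ ∑ ξ : G, ‖fhat ξ * e x₀ ξ‖ := norm_sum_le _ _
      _ = ∑ ξ : G, ‖fhat ξ‖ := by
          refine Finset.sum_congr rfl fun ξ _ => ?_
          rw [norm_mul, habs, mul_one]
      _ = ∑ ξ ∈ B, ‖fhat ξ‖ := by
          refine (Finset.sum_subset (Finset.subset_univ B) ?_).symm
          intro ξ _ hξ
          rw [hB, Set.mem_toFinset, Function.mem_support, not_not] at hξ
          simp [hξ]
      _ ≤ ∑ _ξ ∈ B, (Fintype.card G : ℝ)⁻¹ * (A.card * M) := by
          exact Finset.sum_le_sum fun ξ _ => hbound ξ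
      _ = B.card * ((Fintype.card G : ℝ)⁻¹ * (A.card * M)) := by
          rw [Finset.sum_const, nsmul_eq_mul]
  have hfinal : (Fintype.card G : ℝ) ≤ (A.card : ℝ) * B.card := by
    have h2 := mul_le_mul_of_nonneg_left hmain hNR.le
    have h3 : (Fintype.card G : ℝ) * M ≤ ((A.card : ℝ) * B.card) * M := by
      calc (Fintype.card G : ℝ) * M
          ≤ (Fintype.card G : ℝ) * ((B.card : ℝ) * ((Fintype.card G : ℝ)⁻¹ * (A.card * M))) := h2
        _ = ((Fintype.card G : ℝ)⁻¹ * (Fintype.card G : ℝ)) * ((A.card : ℝ) * B.card * M) := by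
            ring
        _ = ((A.card : ℝ) * B.card) * M := by
            rw [inv_mul_cancel₀ hNR.ne', one_mul]
    exact le_of_mul_le_mul_right h3 hMpos
  have hcast : Fintype.card G ≤ A.card * B.card := by exact_mod_cast hfinal
  rw [ge_iff_le, Set.ncard_eq_toFinset_card', Set.ncard_eq_toFinset_card']
  exact hcast
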